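/- Cauchy interlacing theorem: If A is an n×n Hermitian matrix and B is an (n−1)×(n−1) principal submatrix of A, then the eigenvalues of B interlace those of A: λ_{k}(A) ≤ λ_k(B) ≤ λ_{k+1}(A) for 1 ≤ k ≤ n−1, where eigenvalues are arranged in increasing order. -/

import Mathlib

open Matrix Finset Module

namespace CauchyAux

variable {m r s : ℕ}

lemma nsq_sum (x : Fin m → ℂ) : (star x ⬝ᵥ x).re = ∑ p, Complex.normSq (x p) := by
  simp [dotProduct, Complex.normSq_apply, mul_comm]

lemma nsq_pos {x : Fin m → ℂ} (hx : x ≠ 0) : 0 < (star x ⬝ᵥ x).re := by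
  rw [nsq_sum]
  obtain ⟨p, hp⟩ := Function.ne_iff.mp hx
  exact Finset.sum_pos' (fun q _ => Complex.normSq_nonneg _)
    ⟨p, Finset.mem_univ p, Complex.normSq_pos.mpr hp⟩

lemma sum_dot (f : Fin r → Fin m → ℂ) (y : Fin m → ℂ) :
    (∑ j, f j) ⬝ᵥ y = ∑ j, f j ⬝ᵥ y := by
  simp only [dotProduct, Finset.sum_apply, Finset.sum_mul]
  exact Finset.sum_comm

lemma dot_sum' (y : Fin m → ℂ) (f : Fin r → Fin m → ℂ) :
    y ⬝ᵥ (∑ j, f j) = ∑ j, y ⬝ᵥ f j := by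
  simp only [dotProduct, Finset.sum_apply, Finset.mul_sum]
  exact Finset.sum_comm

lemma star_sum_dot (c : Fin r → ℂ) (v : Fin r → Fin m → ℂ) (y : Fin m → ℂ) :
    star (∑ j, c j • v j) ⬝ᵥ y = ∑ j, (starRingEnd ℂ) (c j) * (star (v j) ⬝ᵥ y) := by
  rw [star_sum]
  rw [show (∑ j, star (c j • v j)) = ∑ j, (starRingEnd ℂ) (c j) • star (v j) by
    congr 1; funext j; rw [star_smul]; rfl]
  rw [sum_dot]
  simp

lemma dot_sum (y : Fin m → ℂ) (c : Fin r → ℂ) (v : Fin r → Fin m → ℂ) :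
    y ⬝ᵥ (∑ j, c j • v j) = ∑ j, c j * (y ⬝ᵥ v j) := by
  rw [dot_sum']
  simp

lemma repr_lemma (A : Matrix (Fin m) (Fin m) ℂ) (v : Fin r → Fin m → ℂ) (μ : Fin r → ℝ)
    (h1 : ∀ j k, star (v j) ⬝ᵥ v k = if j = k then 1 else 0)
    (h2 : ∀ j k, star (v j) ⬝ᵥ (A *ᵥ v k) = if j = k then (μ j : ℂ) else 0)
    {x : Fin m → ℂ} (hx : x ∈ Submodule.span ℂ (Set.range v)) :
    ∃ d : Fin r → ℝ, (∀ j, 0 ≤ d j) ∧ (star x ⬝ᵥ x).re = ∑ j, d j ∧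
      (star x ⬝ᵥ (A *ᵥ x)).re = ∑ j, μ j * d j := by
  obtain ⟨c, rfl⟩ := (Submodule.mem_span_range_iff_exists_fun ℂ).mp hx
  refine ⟨fun j => Complex.normSq (c j), fun j => Complex.normSq_nonneg _, ?_, ?_⟩
  · have : star (∑ j, c j • v j) ⬝ᵥ (∑ j, c j • v j)
        = ∑ j, (starRingEnd ℂ) (c j) * c j := by
      rw [star_sum_dot]
      congr 1; funext j
      rw [dot_sum]
      simp [h1]
    rw [this]
    simp [← Complex.normSq_eq_conj_mul_self]
  · have hmv : A *ᵥ (∑ j, c j • v j) = ∑ j, c j • (A *ᵥ v j) := by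
      rw [← Matrix.mulVecLin_apply, map_sum]
      simp [Matrix.mulVecLin_apply]
    rw [hmv]
    have : star (∑ j, c j • v j) ⬝ᵥ (∑ j, c j • (A *ᵥ v j))
        = ∑ j, ((μ j : ℂ) * ((starRingEnd ℂ) (c j) * c j)) := by
      rw [star_sum_dot]
      congr 1; funext j
      rw [dot_sum]
      simp [h2]
      ring
    rw [this]
    simp [← Complex.normSq_eq_conj_mul_self, ← Complex.ofReal_mul]

lemma li_of_ortho (u : Fin r → Fin m → ℂ)
    (h : ∀ j k, star (u j) ⬝ᵥ u k = if j = k then 1 else 0) :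
    LinearIndependent ℂ u := by
  rw [Fintype.linearIndependent_iff]
  intro c hc k
  have h2 := congrArg (fun y => star (u k) ⬝ᵥ y) hc
  simpa [dot_sum, h] using h2

lemma exists_ne_zero_mem_inf (v : Fin r → Fin m → ℂ) (w : Fin s → Fin m → ℂ)
    (hv : ∀ j k, star (v j) ⬝ᵥ v k = if j = k then 1 else 0)
    (hw : ∀ j k, star (w j) ⬝ᵥ w k = if j = k then 1 else 0)
    (hcard : m < r + s) :
    ∃ x : Fin m → ℂ, x ≠ 0 ∧ x ∈ Submodule.span ℂ (Set.range v) ∧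
      x ∈ Submodule.span ℂ (Set.range w) := by
  set V := Submodule.span ℂ (Set.range v)
  set W := Submodule.span ℂ (Set.range w)
  have hV : finrank ℂ V = r := by
    rw [finrank_span_eq_card (li_of_ortho v hv), Fintype.card_fin]
  have hW : finrank ℂ W = s := by
    rw [finrank_span_eq_card (li_of_ortho w hw), Fintype.card_fin]
  have htop : finrank ℂ ↥(V ⊔ W) ≤ m := by
    have := Submodule.finrank_le (V ⊔ W)
    simpa using this
  have hsum := Submodule.finrank_sup_add_finrank_inf_eq V W
  have hpos : 0 < finrank ℂ ↥(V ⊓ W) := by omega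
  have hne : V ⊓ W ≠ ⊥ := by
    intro h
    rw [h, finrank_bot] at hpos
    omega
  obtain ⟨x, hx, hx0⟩ := Submodule.exists_mem_ne_zero_of_ne_bot hne
  exact ⟨x, hx0, hx.1, hx.2⟩

lemma key (A : Matrix (Fin m) (Fin m) ℂ) (v : Fin r → Fin m → ℂ) (w : Fin s → Fin m → ℂ)
    (μ : Fin r → ℝ) (ν : Fin s → ℝ)
    (hv1 : ∀ j k, star (v j) ⬝ᵥ v k = if j = k then 1 else 0)
    (hv2 : ∀ j k, star (v j) ⬝ᵥ (A *ᵥ v k) = if j = k then (μ j : ℂ) else 0)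
    (hw1 : ∀ j k, star (w j) ⬝ᵥ w k = if j = k then 1 else 0)
    (hw2 : ∀ j k, star (w j) ⬝ᵥ (A *ᵥ w k) = if j = k then (ν j : ℂ) else 0)
    (hcard : m < r + s) (a b : ℝ) (ha : ∀ j, μ j ≤ a) (hb : ∀ j, b ≤ ν j) :
    b ≤ a := by
  obtain ⟨x, hx0, hxv, hxw⟩ := exists_ne_zero_mem_inf v w hv1 hw1 hcard
  obtain ⟨d, hd0, hdn, hdq⟩ := repr_lemma A v μ hv1 hv2 hxv
  obtain ⟨e, he0, hen, heq⟩ := repr_lemma A w ν hw1 hw2 hxw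
  have hN : 0 < (star x ⬝ᵥ x).re := nsq_pos hx0
  have hqa : (star x ⬝ᵥ (A *ᵥ x)).re ≤ a * (star x ⬝ᵥ x).re := by
    rw [hdq, hdn, Finset.mul_sum]
    exact Finset.sum_le_sum fun j _ => mul_le_mul_of_nonneg_right (ha j) (hd0 j)
  have hqb : b * (star x ⬝ᵥ x).re ≤ (star x ⬝ᵥ (A *ᵥ x)).re := by
    rw [heq, hen, Finset.mul_sum]
    exact Finset.sum_le_sum fun j _ => mul_le_mul_of_nonneg_right (hb j) (he0 j)
  exact le_of_mul_le_mul_right (hqb.trans hqa) hN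

lemma real_smul_vec (t : ℝ) (y : Fin m → ℂ) : t • y = (t : ℂ) • y := by
  funext p
  simp [Complex.real_smul]

lemma dot_insertNth (i : Fin (m + 1)) (y z : Fin m → ℂ) :
    star (i.insertNth 0 y) ⬝ᵥ (i.insertNth 0 z) = star y ⬝ᵥ z := by
  simp [dotProduct, Fin.sum_univ_succAbove _ i]

lemma dot_A_insertNth (A : Matrix (Fin (m + 1)) (Fin (m + 1)) ℂ) (i : Fin (m + 1))
    (y z : Fin m → ℂ) :
    star (i.insertNth 0 y) ⬝ᵥ (A *ᵥ i.insertNth 0 z)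
      = star y ⬝ᵥ ((A.submatrix i.succAbove i.succAbove) *ᵥ z) := by
  simp [dotProduct, Matrix.mulVec, Fin.sum_univ_succAbove _ i]

end CauchyAux

open CauchyAux in
theorem cauchy_interlacing (n : ℕ) (A : Matrix (Fin (n + 1)) (Fin (n + 1)) ℂ)
    (hA : A.IsHermitian) (i : Fin (n + 1))
    (hB : (A.submatrix i.succAbove i.succAbove).IsHermitian) :
    ∀ k : Fin n,
      (hA.eigenvalues ∘ Tuple.sort hA.eigenvalues) k.castSucc ≤
        (hB.eigenvalues ∘ Tuple.sort hB.eigenvalues) k ∧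
      (hB.eigenvalues ∘ Tuple.sort hB.eigenvalues) k ≤
        (hA.eigenvalues ∘ Tuple.sort hA.eigenvalues) k.succ := by
  intro k
  set B := A.submatrix i.succAbove i.succAbove with hBdef
  set σA := Tuple.sort hA.eigenvalues with hσA
  set σB := Tuple.sort hB.eigenvalues with hσB
  set lam : Fin (n + 1) → ℝ := hA.eigenvalues ∘ σA with hlamdef
  set mu : Fin n → ℝ := hB.eigenvalues ∘ σB with hmudef
  have hlam : Monotone lam := Tuple.monotone_sort _
  have hmu : Monotone mu := Tuple.monotone_sort _
  set vA : Fin (n + 1) → Fin (n + 1) → ℂ := fun j => ⇑(hA.eigenvectorBasis (σA j)) with hvA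
  set vB : Fin n → Fin n → ℂ := fun j => ⇑(hB.eigenvectorBasis (σB j)) with hvB
  have hA1 : ∀ j k', star (vA j) ⬝ᵥ vA k' = if j = k' then 1 else 0 := by
    intro j k'
    have h := (orthonormal_iff_ite.mp hA.eigenvectorBasis.orthonormal) (σA j) (σA k')
    rw [EuclideanSpace.inner_eq_star_dotProduct, dotProduct_comm] at h
    simpa [Equiv.apply_eq_iff_eq] using h
  have hB1 : ∀ j k', star (vB j) ⬝ᵥ vB k' = if j = k' then 1 else 0 := by
    intro j k'
    have h := (orthonormal_iff_ite.mp hB.eigenvectorBasis.orthonormal) (σB j) (σB k')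
    rw [EuclideanSpace.inner_eq_star_dotProduct, dotProduct_comm] at h
    simpa [Equiv.apply_eq_iff_eq] using h
  have hA2 : ∀ j k', star (vA j) ⬝ᵥ (A *ᵥ vA k') = if j = k' then (lam j : ℂ) else 0 := by
    intro j k'
    rw [show A *ᵥ vA k' = lam k' • vA k' from hA.mulVec_eigenvectorBasis (σA k'),
      real_smul_vec, dotProduct_smul, hA1 j k']
    by_cases h : j = k' <;> simp [h]
  have hB2' : ∀ j k', star (vB j) ⬝ᵥ (B *ᵥ vB k') = if j = k' then (mu j : ℂ) else 0 := by
    intro j k'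
    rw [show B *ᵥ vB k' = mu k' • vB k' from hB.mulVec_eigenvectorBasis (σB k'),
      real_smul_vec, dotProduct_smul, hB1 j k']
    by_cases h : j = k' <;> simp [h]
  set w : Fin n → Fin (n + 1) → ℂ := fun j => i.insertNth 0 (vB j) with hw
  have hw1 : ∀ j k', star (w j) ⬝ᵥ w k' = if j = k' then 1 else 0 := by
    intro j k'
    rw [hw]
    simp only
    rw [dot_insertNth]
    exact hB1 j k'
  have hw2 : ∀ j k', star (w j) ⬝ᵥ (A *ᵥ w k') = if j = k' then (mu j : ℂ) else 0 := by
    intro j k'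
    rw [hw]
    simp only
    rw [dot_A_insertNth]
    exact hB2' j k'
  have hk := k.2
  constructor
  · -- lam k.castSucc ≤ mu k
    refine key A
      (fun t : Fin (k.1 + 1) => w ⟨t.1, by omega⟩)
      (fun t : Fin (n + 1 - k.1) => vA ⟨k.1 + t.1, by omega⟩)
      (fun t => mu ⟨t.1, by omega⟩) (fun t => lam ⟨k.1 + t.1, by omega⟩)
      (fun j k' => by rw [hw1]; exact if_congr (by simp [Fin.ext_iff]) rfl rfl)
      (fun j k' => by rw [hw2]; exact if_congr (by simp [Fin.ext_iff]) rfl rfl)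
      (fun j k' => by rw [hA1]; exact if_congr (by simp [Fin.ext_iff]; try omega) rfl rfl)
      (fun j k' => by rw [hA2]; exact if_congr (by simp [Fin.ext_iff]; try omega) rfl rfl)
      (by omega) (mu k) (lam k.castSucc)
      (fun t => hmu (by simp [Fin.le_def]; omega))
      (fun t => hlam (by simp [Fin.le_def]))
  · -- mu k ≤ lam k.succ
    refine key A
      (fun t : Fin (k.1 + 2) => vA ⟨t.1, by omega⟩)
      (fun t : Fin (n - k.1) => w ⟨k.1 + t.1, by omega⟩)
      (fun t => lam ⟨t.1, by omega⟩) (fun t => mu ⟨k.1 + t.1, by omega⟩)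
      (fun j k' => by rw [hA1]; exact if_congr (by simp [Fin.ext_iff]) rfl rfl)
      (fun j k' => by rw [hA2]; exact if_congr (by simp [Fin.ext_iff]) rfl rfl)
      (fun j k' => by rw [hw1]; exact if_congr (by simp [Fin.ext_iff]; try omega) rfl rfl)
      (fun j k' => by rw [hw2]; exact if_congr (by simp [Fin.ext_iff]; try omega) rfl rfl)
      (by omega) (lam k.succ) (mu k)
      (fun t => hlam (by simp [Fin.le_def]; omega))
      (fun t => hmu (by simp [Fin.le_def]))
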